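/- For K = 3 classes, there exists a positive real number γ and a finite sequence of labeled examples (x_1,y_1),…,(x_T,y_T) in ℝ² with labels in {1,2,3} that is weakly linearly separable with margin γ, but is not strongly linearly separable with margin γ' for any γ' > 0. -/

import Mathlib

open scoped RealInnerProductSpace
open Finset

/-- Labeled examples are weakly linearly separable with margin `γ`. -/
def WeaklySeparable {V : Type*} [NormedAddCommGroup V] [InnerProductSpace ℝ V]
    {T K : ℕ} (x : Fin T → V) (y : Fin T → Fin K) (γ : ℝ) : Prop :=
  ∃ w : Fin K → V, (∑ i, ‖w i‖ ^ 2 ≤ 1) ∧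
    ∀ t : Fin T, ∀ i : Fin K, i ≠ y t → ⟪x t, w (y t)⟫ ≥ ⟪x t, w i⟫ + γ

/-- Labeled examples are strongly linearly separable with margin `γ`. -/
def StronglySeparable {V : Type*} [NormedAddCommGroup V] [InnerProductSpace ℝ V]
    {T K : ℕ} (x : Fin T → V) (y : Fin T → Fin K) (γ : ℝ) : Prop :=
  ∃ w : Fin K → V, (∑ i, ‖w i‖ ^ 2 ≤ 1) ∧
    (∀ t : Fin T, ⟪x t, w (y t)⟫ ≥ γ / 2) ∧
    ∀ t : Fin T, ∀ i : Fin K, i ≠ y t → ⟪x t, w i⟫ ≤ -(γ / 2)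

/-- For `K = 3` classes there is a positive margin `γ` and a finite sequence of labeled
examples in `ℝ²` that is weakly linearly separable with margin `γ` but is not strongly
linearly separable with any positive margin. -/
theorem exists_weakly_not_strongly_separable :
    ∃ (γ : ℝ), 0 < γ ∧ ∃ (T : ℕ) (x : Fin T → EuclideanSpace ℝ (Fin 2)) (y : Fin T → Fin 3),
      WeaklySeparable x y γ ∧ ∀ γ' : ℝ, 0 < γ' → ¬ StronglySeparable x y γ' := by
  refine ⟨1/2, by norm_num, 3,
    (![!₂[-2,1], !₂[0,1], !₂[2,1]] : Fin 3 → EuclideanSpace ℝ (Fin 2)), ![0,1,2], ?_, ?_⟩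
  · refine ⟨(![!₂[-1/2,-1/2], !₂[0,0], !₂[1/2,-1/2]] : Fin 3 → EuclideanSpace ℝ (Fin 2)), ?_, ?_⟩
    · simp only [← real_inner_self_eq_norm_sq, Fin.sum_univ_three, PiLp.inner_apply,
        Fin.sum_univ_two, RCLike.inner_apply, conj_trivial]
      norm_num [Matrix.cons_val_two, Matrix.tail_cons, Matrix.head_cons]
    · intro t i hi
      fin_cases t <;> fin_cases i <;>
        simp_all [PiLp.inner_apply, Fin.sum_univ_two] <;> norm_num
  · rintro γ' hγ' ⟨w, -, hpos, hneg⟩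
    have h1 := hneg 0 1 (by decide)
    have h3 := hneg 2 1 (by decide)
    have h2 := hpos 1
    simp only [PiLp.inner_apply, Fin.sum_univ_two, RCLike.inner_apply, conj_trivial,
      Matrix.cons_val_zero, Matrix.cons_val_one, Matrix.head_cons,
      Matrix.cons_val_two, Matrix.tail_cons] at h1 h2 h3
    norm_num at h1 h2 h3
    linarith
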